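/- Let Y be a real-valued random variable with finite fourth moment, 0 < E[Y⁴], and let C = E[Y]. Then P[Y ≤ 0] ≥ (max{0, (E[Y²]³ / E[Y⁴])^{1/2} − C})^{4/3} / (2^{4/3} · E[Y⁴]^{1/3}). -/

import Mathlib

open MeasureTheory ProbabilityTheory
open scoped ENNReal BigOperators

lemma sq_integral_mul_le {Ω : Type*} [MeasurableSpace Ω] (μ : Measure Ω) {f g : Ω → ℝ}
    (hf0 : ∀ ω, 0 ≤ f ω) (hg0 : ∀ ω, 0 ≤ g ω)
    (hfm : AEStronglyMeasurable f μ) (hgm : AEStronglyMeasurable g μ)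
    (hf2 : Integrable (fun ω => f ω ^ 2) μ) (hg2 : Integrable (fun ω => g ω ^ 2) μ) :
    (∫ ω, f ω * g ω ∂μ) ^ 2 ≤ (∫ ω, f ω ^ 2 ∂μ) * (∫ ω, g ω ^ 2 ∂μ) := by
  have hpq : Real.HolderConjugate 2 2 := Real.holderConjugate_iff.mpr ⟨one_lt_two, by norm_num⟩
  have hfL : MemLp f (ENNReal.ofReal 2) μ := by
    rw [ENNReal.ofReal_ofNat]
    exact (memLp_two_iff_integrable_sq hfm).2 hf2
  have hgL : MemLp g (ENNReal.ofReal 2) μ := by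
    rw [ENNReal.ofReal_ofNat]
    exact (memLp_two_iff_integrable_sq hgm).2 hg2
  have h := integral_mul_le_Lp_mul_Lq_of_nonneg hpq
    (Filter.Eventually.of_forall hf0) (Filter.Eventually.of_forall hg0) hfL hgL
  simp only [Real.rpow_two] at h
  have hA : 0 ≤ ∫ ω, f ω ^ 2 ∂μ := integral_nonneg fun ω => sq_nonneg _
  have hB : 0 ≤ ∫ ω, g ω ^ 2 ∂μ := integral_nonneg fun ω => sq_nonneg _
  have h0 : 0 ≤ ∫ ω, f ω * g ω ∂μ :=
    integral_nonneg fun ω => mul_nonneg (hf0 ω) (hg0 ω)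
  have key : ∀ x : ℝ, 0 ≤ x → (x ^ ((1:ℝ)/2)) ^ 2 = x := by
    intro x hx
    rw [← Real.rpow_natCast (x ^ ((1:ℝ)/2)) 2, ← Real.rpow_mul hx]
    norm_num
  calc (∫ ω, f ω * g ω ∂μ) ^ 2
      ≤ ((∫ ω, f ω ^ 2 ∂μ) ^ ((1:ℝ)/2) * (∫ ω, g ω ^ 2 ∂μ) ^ ((1:ℝ)/2)) ^ 2 := by
        apply pow_le_pow_left₀ h0 h
    _ = (∫ ω, f ω ^ 2 ∂μ) * (∫ ω, g ω ^ 2 ∂μ) := by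
        rw [mul_pow, key _ hA, key _ hB]

set_option maxHeartbeats 1000000 in
lemma aux_bound
    {Ω : Type*} [MeasurableSpace Ω] (μ : Measure Ω) [IsProbabilityMeasure μ]
    (Y : Ω → ℝ) (hm : Measurable Y)
    (hY1 : Integrable Y μ)
    (hY2 : Integrable (fun ω => Y ω ^ 2) μ)
    (hY3 : Integrable (fun ω => Y ω ^ 3) μ)
    (hY4 : Integrable (fun ω => Y ω ^ 4) μ)
    (h4pos : 0 < ∫ ω, Y ω ^ 4 ∂μ) :
    ENNReal.ofReal
        ((max 0 (((∫ ω, Y ω ^ 2 ∂μ) ^ 3 / ∫ ω, Y ω ^ 4 ∂μ) ^ ((1 : ℝ) / 2) - ∫ ω, Y ω ∂μ))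
            ^ ((4 : ℝ) / 3)
          / ((2 : ℝ) ^ ((4 : ℝ) / 3) * (∫ ω, Y ω ^ 4 ∂μ) ^ ((1 : ℝ) / 3)))
      ≤ μ {ω | Y ω ≤ 0} := by
  set M1 : ℝ := ∫ ω, |Y ω| ∂μ with hM1def
  set M2 : ℝ := ∫ ω, Y ω ^ 2 ∂μ with hM2def
  set M3 : ℝ := ∫ ω, |Y ω| ^ 3 ∂μ with hM3def
  set M4 : ℝ := ∫ ω, Y ω ^ 4 ∂μ with hM4def
  set C : ℝ := ∫ ω, Y ω ∂μ with hCdef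
  set N : Ω → ℝ := fun ω => max (-Y ω) 0 with hNdef
  set s : Set Ω := {ω | Y ω ≤ 0} with hsdef
  have hs : MeasurableSet s := measurableSet_le hm measurable_const
  set P : ℝ := (μ s).toReal with hPdef
  set χ : Ω → ℝ := s.indicator (fun _ => (1:ℝ)) with hχdef
  set E : ℝ := ∫ ω, N ω ∂μ with hEdef
  -- basic nonneg facts
  have hP0 : 0 ≤ P := ENNReal.toReal_nonneg
  have hM10 : 0 ≤ M1 := integral_nonneg fun ω => abs_nonneg _
  have hM20 : 0 ≤ M2 := integral_nonneg fun ω => sq_nonneg _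
  have hM40 : 0 ≤ M4 := le_of_lt h4pos
  have hN0 : ∀ ω, 0 ≤ N ω := fun ω => le_max_right _ _
  have hE0 : 0 ≤ E := integral_nonneg hN0
  have hNle : ∀ ω, N ω ≤ |Y ω| := fun ω => max_le (neg_le_abs _) (abs_nonneg _)
  have hχ0 : ∀ ω, 0 ≤ χ ω := fun ω => Set.indicator_nonneg (fun _ _ => zero_le_one) ω
  -- integrability
  have hAbsInt : Integrable (fun ω => |Y ω|) μ := hY1.abs
  have hAbs3Int : Integrable (fun ω => |Y ω| ^ 3) μ :=
    hY3.abs.congr (Filter.Eventually.of_forall fun ω => abs_pow (Y ω) 3)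
  have hNint : Integrable N μ := hY1.neg_part
  have hNm : AEStronglyMeasurable N μ := hNint.1
  have hN2int : Integrable (fun ω => N ω ^ 2) μ := by
    refine Integrable.mono hY2 ((hNm.aemeasurable.pow_const 2).aestronglyMeasurable) ?_
    refine Filter.Eventually.of_forall fun ω => ?_
    rw [Real.norm_eq_abs, Real.norm_eq_abs, abs_of_nonneg (pow_nonneg (hN0 ω) 2),
      abs_of_nonneg (sq_nonneg _)]
    calc N ω ^ 2 ≤ |Y ω| ^ 2 := pow_le_pow_left₀ (hN0 ω) (hNle ω) 2
      _ = Y ω ^ 2 := sq_abs _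
  have hN4int : Integrable (fun ω => N ω ^ 4) μ := by
    refine Integrable.mono hY4 ((hNm.aemeasurable.pow_const 4).aestronglyMeasurable) ?_
    refine Filter.Eventually.of_forall fun ω => ?_
    rw [Real.norm_eq_abs, Real.norm_eq_abs, abs_of_nonneg (pow_nonneg (hN0 ω) 4),
      abs_of_nonneg (by positivity : (0:ℝ) ≤ Y ω ^ 4)]
    calc N ω ^ 4 ≤ |Y ω| ^ 4 := pow_le_pow_left₀ (hN0 ω) (hNle ω) 4
      _ = Y ω ^ 4 := by rw [← abs_pow, abs_of_nonneg (by positivity : (0:ℝ) ≤ Y ω ^ 4)]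
  have hχint : Integrable χ μ := (integrable_const (1:ℝ)).indicator hs
  have hχsq : ∀ ω, χ ω ^ 2 = χ ω := by
    intro ω
    by_cases h : ω ∈ s <;> simp [hχdef, Set.indicator_of_mem, Set.indicator_of_notMem, h]
  have hχ2int : Integrable (fun ω => χ ω ^ 2) μ :=
    hχint.congr (Filter.Eventually.of_forall fun ω => (hχsq ω).symm)
  have hχm : AEStronglyMeasurable χ μ := hχint.1
  have hχI : ∫ ω, χ ω ∂μ = P := by
    rw [hχdef, integral_indicator_const _ hs]; simp [hPdef, Measure.real]
  have hχ2I : ∫ ω, χ ω ^ 2 ∂μ = P := by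
    rw [integral_congr_ae (Filter.Eventually.of_forall fun ω => hχsq ω), hχI]
  -- CS1 : M2^2 ≤ M1 * M3
  have rpowkey : ∀ x : ℝ, 0 ≤ x → ∀ a : ℝ, ∀ n : ℕ, a * 2 = (n:ℝ) → (x ^ a) ^ 2 = x ^ n := by
    intro x hx a n h
    rw [← Real.rpow_natCast (x ^ a) 2, ← Real.rpow_mul hx,
      show a * ((2:ℕ):ℝ) = (n:ℝ) by push_cast; linarith, Real.rpow_natCast]
  have CS1 : M2 ^ 2 ≤ M1 * M3 := by
    have h := sq_integral_mul_le μ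
      (f := fun ω => |Y ω| ^ ((1:ℝ)/2)) (g := fun ω => |Y ω| ^ ((3:ℝ)/2))
      (fun ω => Real.rpow_nonneg (abs_nonneg _) _)
      (fun ω => Real.rpow_nonneg (abs_nonneg _) _)
      (((Real.continuous_rpow_const (by norm_num : (0:ℝ) ≤ 1/2)).measurable.comp
        hm.abs).aestronglyMeasurable)
      (((Real.continuous_rpow_const (by norm_num : (0:ℝ) ≤ 3/2)).measurable.comp
        hm.abs).aestronglyMeasurable)
      (hAbsInt.congr (Filter.Eventually.of_forall fun ω => by
        show |Y ω| = (|Y ω| ^ ((1:ℝ)/2)) ^ 2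
        rw [rpowkey _ (abs_nonneg (Y ω)) ((1:ℝ)/2) 1 (by norm_num), pow_one]))
      (hAbs3Int.congr (Filter.Eventually.of_forall fun ω => by
        show |Y ω| ^ 3 = (|Y ω| ^ ((3:ℝ)/2)) ^ 2
        rw [rpowkey _ (abs_nonneg (Y ω)) ((3:ℝ)/2) 3 (by norm_num)]))
    have e1 : ∫ ω, |Y ω| ^ ((1:ℝ)/2) * |Y ω| ^ ((3:ℝ)/2) ∂μ = M2 := by
      refine integral_congr_ae (Filter.Eventually.of_forall fun ω => ?_)
      show |Y ω| ^ ((1:ℝ)/2) * |Y ω| ^ ((3:ℝ)/2) = Y ω ^ 2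
      rw [← Real.rpow_add' (abs_nonneg _) (by norm_num),
        show (1:ℝ)/2 + (3:ℝ)/2 = ((2:ℕ):ℝ) by norm_num, Real.rpow_natCast, sq_abs]
    have e2 : ∫ ω, (|Y ω| ^ ((1:ℝ)/2)) ^ 2 ∂μ = M1 := by
      refine integral_congr_ae (Filter.Eventually.of_forall fun ω => ?_)
      show (|Y ω| ^ ((1:ℝ)/2)) ^ 2 = |Y ω|
      rw [rpowkey _ (abs_nonneg (Y ω)) ((1:ℝ)/2) 1 (by norm_num), pow_one]
    have e3 : ∫ ω, (|Y ω| ^ ((3:ℝ)/2)) ^ 2 ∂μ = M3 := by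
      refine integral_congr_ae (Filter.Eventually.of_forall fun ω => ?_)
      show (|Y ω| ^ ((3:ℝ)/2)) ^ 2 = |Y ω| ^ 3
      rw [rpowkey _ (abs_nonneg (Y ω)) ((3:ℝ)/2) 3 (by norm_num)]
    beta_reduce at h
    rw [e1, e2, e3] at h
    exact h
  -- CS2 : M3^2 ≤ M2 * M4
  have CS2 : M3 ^ 2 ≤ M2 * M4 := by
    have h := sq_integral_mul_le μ
      (f := fun ω => |Y ω|) (g := fun ω => Y ω ^ 2)
      (fun ω => abs_nonneg _) (fun ω => sq_nonneg _)
      hm.abs.aestronglyMeasurable ((hm.pow_const 2).aestronglyMeasurable)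
      (hY2.congr (Filter.Eventually.of_forall fun ω =>
        show Y ω ^ 2 = |Y ω| ^ 2 from (sq_abs (Y ω)).symm))
      (hY4.congr (Filter.Eventually.of_forall fun ω =>
        show Y ω ^ 4 = (Y ω ^ 2) ^ 2 by ring))
    have e1 : ∫ ω, |Y ω| * Y ω ^ 2 ∂μ = M3 := by
      refine integral_congr_ae (Filter.Eventually.of_forall fun ω => ?_)
      show |Y ω| * Y ω ^ 2 = |Y ω| ^ 3
      rw [← sq_abs (Y ω), ← pow_succ']
    have e2 : ∫ ω, |Y ω| ^ 2 ∂μ = M2 := by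
      refine integral_congr_ae (Filter.Eventually.of_forall fun ω => ?_)
      show |Y ω| ^ 2 = Y ω ^ 2
      rw [sq_abs]
    have e3 : ∫ ω, (Y ω ^ 2) ^ 2 ∂μ = M4 := by
      refine integral_congr_ae (Filter.Eventually.of_forall fun ω => ?_)
      show (Y ω ^ 2) ^ 2 = Y ω ^ 4
      ring
    beta_reduce at h
    rw [e1, e2, e3] at h
    exact h
  -- CS3 : E^2 ≤ Q * P,  CS4 : Q^2 ≤ M4 * P
  set Q : ℝ := ∫ ω, N ω ^ 2 ∂μ with hQdef
  have hQ0 : 0 ≤ Q := integral_nonneg fun ω => sq_nonneg _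
  have hNχ : ∀ ω, N ω * χ ω = N ω := by
    intro ω
    by_cases h : ω ∈ s
    · simp [hχdef, Set.indicator_of_mem h]
    · have : 0 < Y ω := by simpa [hsdef, not_le] using h
      have : N ω = 0 := max_eq_right (by linarith)
      simp [this]
  have CS3 : E ^ 2 ≤ Q * P := by
    have h := sq_integral_mul_le μ (f := N) (g := χ) hN0 hχ0 hNm hχm hN2int hχ2int
    beta_reduce at h
    rw [integral_congr_ae (Filter.Eventually.of_forall hNχ), hχ2I] at h
    exact h
  have CS4 : Q ^ 2 ≤ M4 * P := by
    have h := sq_integral_mul_le μ (f := fun ω => N ω ^ 2) (g := χ)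
      (fun ω => sq_nonneg _) hχ0 ((hNm.aemeasurable.pow_const 2).aestronglyMeasurable) hχm
      (hN4int.congr (Filter.Eventually.of_forall fun ω =>
        show N ω ^ 4 = (N ω ^ 2) ^ 2 by ring)) hχ2int
    have e1 : ∫ ω, N ω ^ 2 * χ ω ∂μ = Q := by
      refine integral_congr_ae (Filter.Eventually.of_forall fun ω => ?_)
      show N ω ^ 2 * χ ω = N ω ^ 2
      by_cases h : ω ∈ s
      · simp [hχdef, Set.indicator_of_mem h]
      · have hY : 0 < Y ω := by simpa [hsdef, not_le] using h
        have : N ω = 0 := max_eq_right (by linarith)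
        simp [this]
    have e2 : ∫ ω, (N ω ^ 2) ^ 2 ∂μ ≤ M4 := by
      refine integral_mono (hN4int.congr (Filter.Eventually.of_forall fun ω =>
        show N ω ^ 4 = (N ω ^ 2) ^ 2 by ring)) hY4 fun ω => ?_
      calc (N ω ^ 2) ^ 2 = N ω ^ 4 := by ring
        _ ≤ |Y ω| ^ 4 := pow_le_pow_left₀ (hN0 ω) (hNle ω) 4
        _ = Y ω ^ 4 := by rw [← abs_pow, abs_of_nonneg (by positivity : (0:ℝ) ≤ Y ω ^ 4)]
    beta_reduce at h
    rw [e1, hχ2I] at h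
    exact h.trans (by nlinarith)
  -- M1 = C + 2E
  have hM1CE : M1 = C + 2 * E := by
    have : ∀ ω, |Y ω| = Y ω + 2 * N ω := by
      intro ω
      rcases le_total (Y ω) 0 with h | h
      · rw [abs_of_nonpos h, hNdef]; simp [max_eq_left (by linarith : (0:ℝ) ≤ -Y ω)]; ring
      · rw [abs_of_nonneg h, hNdef]; simp [max_eq_right (by linarith : -Y ω ≤ (0:ℝ))]
    rw [hM1def, integral_congr_ae (Filter.Eventually.of_forall this),
      integral_add hY1 (hNint.const_mul 2), integral_const_mul]
  -- M2^3 ≤ M1^2 * M4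
  have hM23 : M2 ^ 3 ≤ M1 ^ 2 * M4 := by
    rcases eq_or_lt_of_le hM20 with h | h
    · rw [← h]; norm_num; positivity
    · have hM30 : 0 ≤ M3 := integral_nonneg fun ω => by positivity
      nlinarith [sq_nonneg M1, mul_pos h h4pos]
  -- the max bound : t ≤ 2 E
  set t : ℝ := max 0 ((M2 ^ 3 / M4) ^ ((1:ℝ)/2) - C) with htdef
  have ht0 : 0 ≤ t := le_max_left _ _
  have htE : t ≤ 2 * E := by
    refine max_le (by linarith) ?_
    have h1 : M2 ^ 3 / M4 ≤ M1 ^ 2 := (div_le_iff₀ h4pos).2 hM23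
    have h2 : (M2 ^ 3 / M4) ^ ((1:ℝ)/2) ≤ (M1 ^ 2) ^ ((1:ℝ)/2) :=
      Real.rpow_le_rpow (by positivity) h1 (by norm_num)
    have h3 : (M1 ^ 2) ^ ((1:ℝ)/2) = M1 := by
      rw [← Real.rpow_natCast M1 2, ← Real.rpow_mul hM10]
      norm_num
    rw [h3] at h2
    linarith
  -- E^4 ≤ M4 * P^3
  have hE4 : E ^ 4 ≤ M4 * P ^ 3 := by
    have h1 : (E ^ 2) ^ 2 ≤ (Q * P) ^ 2 := pow_le_pow_left₀ (sq_nonneg E) CS3 2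
    have h2 : Q ^ 2 * P ^ 2 ≤ M4 * P * P ^ 2 :=
      mul_le_mul_of_nonneg_right CS4 (by positivity)
    nlinarith [h1, h2]
  -- final real inequality
  have hfinal : t ^ ((4:ℝ)/3) / ((2:ℝ) ^ ((4:ℝ)/3) * M4 ^ ((1:ℝ)/3)) ≤ P := by
    have hden : 0 < (2:ℝ) ^ ((4:ℝ)/3) * M4 ^ ((1:ℝ)/3) := by positivity
    rw [div_le_iff₀ hden]
    have ht4 : t ^ 4 ≤ 16 * M4 * P ^ 3 := by
      calc t ^ 4 ≤ (2 * E) ^ 4 := pow_le_pow_left₀ ht0 htE 4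
        _ = 16 * E ^ 4 := by ring
        _ ≤ 16 * (M4 * P ^ 3) := by linarith
        _ = 16 * M4 * P ^ 3 := by ring
    have h1 : t ^ ((4:ℝ)/3) = (t ^ 4) ^ ((1:ℝ)/3) := by
      rw [← Real.rpow_natCast t 4, ← Real.rpow_mul ht0]
      norm_num
    have h2 : (t ^ 4) ^ ((1:ℝ)/3) ≤ (16 * M4 * P ^ 3) ^ ((1:ℝ)/3) :=
      Real.rpow_le_rpow (by positivity) ht4 (by norm_num)
    have h3 : (16 * M4 * P ^ 3) ^ ((1:ℝ)/3)
        = (2:ℝ) ^ ((4:ℝ)/3) * M4 ^ ((1:ℝ)/3) * P := by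
      rw [Real.mul_rpow (by positivity) (by positivity),
        Real.mul_rpow (by norm_num) hM40]
      congr 1
      · congr 1
        rw [show (16:ℝ) = 2 ^ (4:ℕ) by norm_num, ← Real.rpow_natCast 2 4,
          ← Real.rpow_mul (by norm_num : (0:ℝ) ≤ 2)]
        norm_num
      · rw [← Real.rpow_natCast P 3, ← Real.rpow_mul hP0]
        norm_num
    rw [h1]
    calc (t ^ 4) ^ ((1:ℝ)/3) ≤ (16 * M4 * P ^ 3) ^ ((1:ℝ)/3) := h2
      _ = (2:ℝ) ^ ((4:ℝ)/3) * M4 ^ ((1:ℝ)/3) * P := h3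
      _ = P * ((2:ℝ) ^ ((4:ℝ)/3) * M4 ^ ((1:ℝ)/3)) := by ring
  -- conclude
  have hμ : μ s = ENNReal.ofReal P := (ENNReal.ofReal_toReal (measure_ne_top μ s)).symm
  rw [show μ {ω | Y ω ≤ 0} = μ s from rfl, hμ]
  exact ENNReal.ofReal_le_ofReal hfinal


/-- Anti-concentration via moments:
`P[Y ≤ 0] ≥ (max{0, (E[Y²]³/E[Y⁴])^{1/2} − E[Y]})^{4/3} / (2^{4/3}·E[Y⁴]^{1/3})`. -/
theorem prob_nonpositive_lower_bound
    {Ω : Type*} [MeasurableSpace Ω] (μ : Measure Ω) [IsProbabilityMeasure μ]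
    (Y : Ω → ℝ)
    (hY1 : Integrable Y μ)
    (hY2 : Integrable (fun ω => Y ω ^ 2) μ)
    (hY3 : Integrable (fun ω => Y ω ^ 3) μ)
    (hY4 : Integrable (fun ω => Y ω ^ 4) μ)
    (h4pos : 0 < ∫ ω, Y ω ^ 4 ∂μ) :
    ENNReal.ofReal
        ((max 0 (((∫ ω, Y ω ^ 2 ∂μ) ^ 3 / ∫ ω, Y ω ^ 4 ∂μ) ^ ((1 : ℝ) / 2) - ∫ ω, Y ω ∂μ))
            ^ ((4 : ℝ) / 3)
          / ((2 : ℝ) ^ ((4 : ℝ) / 3) * (∫ ω, Y ω ^ 4 ∂μ) ^ ((1 : ℝ) / 3)))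
      ≤ μ {ω | Y ω ≤ 0} := by
  have hae := hY1.aestronglyMeasurable
  set Z : Ω → ℝ := hae.mk Y with hZdef
  have hZm : Measurable Z := hae.stronglyMeasurable_mk.measurable
  have hYZ : Y =ᵐ[μ] Z := hae.ae_eq_mk
  have powae : ∀ n : ℕ, (fun ω => Y ω ^ n) =ᵐ[μ] fun ω => Z ω ^ n := fun n =>
    hYZ.mono fun ω h => by show Y ω ^ n = Z ω ^ n; rw [h]
  have h1 : Integrable Z μ := hY1.congr hYZ
  have h2 : Integrable (fun ω => Z ω ^ 2) μ := hY2.congr (powae 2)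
  have h3 : Integrable (fun ω => Z ω ^ 3) μ := hY3.congr (powae 3)
  have h4 : Integrable (fun ω => Z ω ^ 4) μ := hY4.congr (powae 4)
  have i1 : ∫ ω, Y ω ∂μ = ∫ ω, Z ω ∂μ := integral_congr_ae hYZ
  have i2 : ∫ ω, Y ω ^ 2 ∂μ = ∫ ω, Z ω ^ 2 ∂μ := integral_congr_ae (powae 2)
  have i4 : ∫ ω, Y ω ^ 4 ∂μ = ∫ ω, Z ω ^ 4 ∂μ := integral_congr_ae (powae 4)
  have hset : μ {ω | Y ω ≤ 0} = μ {ω | Z ω ≤ 0} := by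
    refine measure_congr (hYZ.mono fun ω h => ?_)
    show (Y ω ≤ 0) = (Z ω ≤ 0); rw [h]
  rw [i1, i2, i4, hset]
  exact aux_bound μ Z hZm h1 h2 h3 h4 (i4 ▸ h4pos)
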